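/- Suppose ρ₂ : ℝ → ℝ is given by ρ₂(x) = −(1/(c²ω)) ∫_{−∞}^x sin(ω(x−y)) g(y) dy where g : ℝ → ℝ is continuous and integrable, c ≠ 0, and ω > 0. If ρ₂(x) → 0 as x → ∞, then ∫_{−∞}^∞ e^{−iωy} g(y) dy = 0. -/

import Mathlib

open MeasureTheory Filter Real

lemma tendsto_Iic_integral (f : ℝ → ℝ) (hf : Integrable f) :
    Tendsto (fun x : ℝ => ∫ y in Set.Iic x, f y) atTop (nhds (∫ y, f y)) := by
  have hU : (⋃ x : ℝ, Set.Iic x) = Set.univ := Set.iUnion_Iic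
  have h := tendsto_setIntegral_of_monotone (f := f) (μ := volume)
    (fun x : ℝ => measurableSet_Iic) (fun a b hab => Set.Iic_subset_Iic.2 hab)
    (hU ▸ hf.integrableOn)
  rwa [hU, setIntegral_univ] at h

theorem antiresonance_necessary (c ω : ℝ) (hc : c ≠ 0) (hω : 0 < ω)
    (g : ℝ → ℝ) (hgc : Continuous g) (hgi : Integrable g) (ρ₂ : ℝ → ℝ)
    (hρ : ∀ x : ℝ, ρ₂ x =
      -(1 / (c^2 * ω)) * ∫ y in Set.Iic x, Real.sin (ω * (x - y)) * g y)
    (hlim : Filter.Tendsto ρ₂ Filter.atTop (nhds 0)) :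
    ∫ y : ℝ, Complex.exp (-(Complex.I * ω * y)) * (g y : ℂ) = 0 := by
  set K : ℝ := -(1 / (c^2 * ω)) with hK
  have hKne : K ≠ 0 := by
    have h1 : (0:ℝ) < c^2 * ω := by positivity
    simp only [hK, ne_eq, neg_eq_zero, div_eq_zero_iff, one_ne_zero, false_or, not_or]
    exact fun h => absurd h (mul_ne_zero (pow_ne_zero 2 hc) hω.ne')
  -- integrability of cos/sin weighted g
  have hcosg : Integrable (fun y => Real.cos (ω * y) * g y) :=
    hgi.bdd_mul ((Real.continuous_cos.comp (continuous_const.mul continuous_id)).aestronglyMeasurable)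
      (c := 1) (Filter.Eventually.of_forall fun y => Real.abs_cos_le_one _)
  have hsing : Integrable (fun y => Real.sin (ω * y) * g y) :=
    hgi.bdd_mul ((Real.continuous_sin.comp (continuous_const.mul continuous_id)).aestronglyMeasurable)
      (c := 1) (Filter.Eventually.of_forall fun y => Real.abs_sin_le_one _)
  set A : ℝ := ∫ y, Real.cos (ω * y) * g y with hA
  set B : ℝ := ∫ y, Real.sin (ω * y) * g y with hB
  set F : ℝ → ℝ := fun x => ∫ y in Set.Iic x, Real.cos (ω * y) * g y with hF
  set G : ℝ → ℝ := fun x => ∫ y in Set.Iic x, Real.sin (ω * y) * g y with hG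
  have hFt : Tendsto F atTop (nhds A) := tendsto_Iic_integral _ hcosg
  have hGt : Tendsto G atTop (nhds B) := tendsto_Iic_integral _ hsing
  -- rewrite ρ₂
  have hρ' : ∀ x, ρ₂ x = K * (Real.sin (ω * x) * F x - Real.cos (ω * x) * G x) := by
    intro x
    rw [hρ x]
    congr 1
    have : ∀ y : ℝ, Real.sin (ω * (x - y)) * g y =
        Real.sin (ω * x) * (Real.cos (ω * y) * g y)
          - Real.cos (ω * x) * (Real.sin (ω * y) * g y) := by
      intro y
      rw [mul_sub ω, Real.sin_sub]
      ring
    rw [integral_congr_ae (Filter.Eventually.of_forall this),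
      integral_sub ((hcosg.const_mul _).integrableOn) ((hsing.const_mul _).integrableOn),
      integral_const_mul, integral_const_mul]
  -- the combination tends to 0
  have hh : Tendsto (fun x => Real.sin (ω * x) * F x - Real.cos (ω * x) * G x)
      atTop (nhds 0) := by
    have h1 : Tendsto (fun x => K⁻¹ * ρ₂ x) atTop (nhds (K⁻¹ * 0)) :=
      hlim.const_mul _
    rw [mul_zero] at h1
    refine h1.congr fun x => ?_
    rw [hρ' x, ← mul_assoc, inv_mul_cancel₀ hKne, one_mul]
  -- sequence 1 : ω x n = π/2 + n*(2π)
  have hA0 : A = 0 := by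
    set x : ℕ → ℝ := fun n => (π/2 + n * (2*π)) / ω with hx
    have hωx : ∀ n, ω * x n = π/2 + n * (2*π) := by
      intro n; rw [hx]; field_simp <;> ring
    have hxt : Tendsto x atTop atTop := by
      apply Tendsto.atTop_div_const hω
      apply tendsto_atTop_add_const_left
      exact (tendsto_natCast_atTop_atTop (R := ℝ)).atTop_mul_const (by positivity)
    have h1 : Tendsto (fun n => Real.sin (ω * x n) * F (x n) - Real.cos (ω * x n) * G (x n))
        atTop (nhds 0) := hh.comp hxt
    have h2 : ∀ n, Real.sin (ω * x n) * F (x n) - Real.cos (ω * x n) * G (x n) = F (x n) := by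
      intro n
      rw [hωx n, Real.sin_add_nat_mul_two_pi, Real.cos_add_nat_mul_two_pi,
        Real.sin_pi_div_two, Real.cos_pi_div_two]
      ring
    have h3 : Tendsto (fun n => F (x n)) atTop (nhds A) := hFt.comp hxt
    exact tendsto_nhds_unique h3 ((h1.congr fun n => h2 n))
  have hB0 : B = 0 := by
    set x : ℕ → ℝ := fun n => (2*π + n * (2*π)) / ω with hx
    have hωx : ∀ n, ω * x n = 2*π + n * (2*π) := by
      intro n; rw [hx]; field_simp <;> ring
    have hxt : Tendsto x atTop atTop := by
      apply Tendsto.atTop_div_const hω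
      apply tendsto_atTop_add_const_left
      exact (tendsto_natCast_atTop_atTop (R := ℝ)).atTop_mul_const (by positivity)
    have h1 : Tendsto (fun n => Real.sin (ω * x n) * F (x n) - Real.cos (ω * x n) * G (x n))
        atTop (nhds 0) := hh.comp hxt
    have h2 : ∀ n, Real.sin (ω * x n) * F (x n) - Real.cos (ω * x n) * G (x n) = -G (x n) := by
      intro n
      rw [hωx n, Real.sin_add_nat_mul_two_pi, Real.cos_add_nat_mul_two_pi,
        Real.sin_two_pi, Real.cos_two_pi]
      ring
    have h3 : Tendsto (fun n => -G (x n)) atTop (nhds (-B)) := (hGt.comp hxt).neg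
    have h4 : -B = 0 := tendsto_nhds_unique h3 ((h1.congr fun n => h2 n))
    linarith [h4]
  -- conclude
  have hint : ∀ y : ℝ, Complex.exp (-(Complex.I * ω * y)) * (g y : ℂ) =
      (Real.cos (ω * y) * g y : ℝ) - (Real.sin (ω * y) * g y : ℝ) * Complex.I := by
    intro y
    have : -(Complex.I * ω * y) = ((-(ω * y) : ℝ) : ℂ) * Complex.I := by
      push_cast; ring
    rw [this, Complex.exp_mul_I, ← Complex.ofReal_cos, ← Complex.ofReal_sin,
      Real.cos_neg, Real.sin_neg]
    push_cast
    ring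
  have e1 : Integrable (fun y : ℝ => ((Real.cos (ω * y) * g y : ℝ) : ℂ)) := hcosg.ofReal
  have e2 : Integrable (fun y : ℝ => ((Real.sin (ω * y) * g y : ℝ) : ℂ) * Complex.I) :=
    (hsing.ofReal).mul_const _
  have e3 : (∫ y : ℝ, ((Real.cos (ω * y) * g y : ℝ) : ℂ)) = ((A : ℝ) : ℂ) :=
    integral_ofReal
  have e4 : (∫ y : ℝ, ((Real.sin (ω * y) * g y : ℝ) : ℂ)) = ((B : ℝ) : ℂ) :=
    integral_ofReal
  rw [integral_congr_ae (Filter.Eventually.of_forall hint), integral_sub e1 e2,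
    integral_mul_const, e3, e4, hA0, hB0]
  simp
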